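/- Let R be a commutative ring and A ∈ Mat_{n×m}(R). (a) If n ≥ m, then the R-linear map A : R^m → R^n is injective if and only if rk(A) = m. (b) If n ≤ m, then the R-linear map A : R^m → R^n is surjective if and only if 𝒰_n(A) = R. -/

import Mathlib

open Matrix

/-- The ideal `𝒰_i(A)` generated by the `i × i` minors of a matrix `A`. -/
def minorsIdeal {R : Type*} [CommRing R] {n m : ℕ}
    (A : Matrix (Fin n) (Fin m) R) (i : ℕ) : Ideal R :=
  Ideal.span {d : R | ∃ (f : Fin i → Fin n) (g : Fin i → Fin m),
    Function.Injective f ∧ Function.Injective g ∧ d = (A.submatrix f g).det}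

/-- The determinantal rank of `A`: the largest `i` such that the annihilator
of `𝒰_i(A)` is zero. -/
noncomputable def detRank {R : Type*} [CommRing R] {n m : ℕ}
    (A : Matrix (Fin n) (Fin m) R) : ℕ :=
  sSup {i : ℕ | i ≤ min n m ∧ (minorsIdeal A i).annihilator = ⊥}

namespace McCoyAux

variable {R : Type*} [CommRing R] {n m : ℕ}

lemma minor_mem (A : Matrix (Fin n) (Fin m) R) {i : ℕ} (f : Fin i → Fin n) (g : Fin i → Fin m)
    (hf : Function.Injective f) (hg : Function.Injective g) :
    (A.submatrix f g).det ∈ minorsIdeal A i :=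
  Ideal.subset_span ⟨f, g, hf, hg, rfl⟩

lemma snoc_inj {k p : ℕ} {f : Fin k → Fin p} (hf : Function.Injective f) {i : Fin p}
    (hi : ∀ l, f l ≠ i) : Function.Injective (Fin.snoc f i : Fin (k + 1) → Fin p) := by
  intro a b hab
  rcases Fin.eq_castSucc_or_eq_last a with ⟨a', rfl⟩ | rfl <;>
    rcases Fin.eq_castSucc_or_eq_last b with ⟨b', rfl⟩ | rfl <;>
    simp only [Fin.snoc_castSucc, Fin.snoc_last] at hab
  · exact congrArg _ (hf hab)
  · exact absurd hab (hi a')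
  · exact absurd hab.symm (hi b')
  · rfl

lemma mulVec_padded (A : Matrix (Fin n) (Fin m) R) {p : ℕ} (g : Fin p → Fin m) (w : Fin p → R)
    (i : Fin n) :
    (A *ᵥ fun jm => ∑ l : Fin p, if jm = g l then w l else 0) i
      = ∑ l : Fin p, A i (g l) * w l := by
  classical
  simp only [Matrix.mulVec, dotProduct, Finset.mul_sum, mul_ite, mul_zero]
  rw [Finset.sum_comm]
  refine Finset.sum_congr rfl fun l _ => ?_
  rw [Finset.sum_eq_single (g l)]
  · simp
  · intro b _ hb; rw [if_neg hb]
  · intro h; exact absurd (Finset.mem_univ _) h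

lemma injective_of_ann (A : Matrix (Fin n) (Fin m) R)
    (h : (minorsIdeal A m).annihilator = ⊥) : Function.Injective A.mulVecLin := by
  classical
  rw [← LinearMap.ker_eq_bot, eq_bot_iff]
  intro v hv
  rw [LinearMap.mem_ker, Matrix.mulVecLin_apply] at hv
  have key : ∀ d ∈ {d : R | ∃ (f : Fin m → Fin n) (g : Fin m → Fin m),
      Function.Injective f ∧ Function.Injective g ∧ d = (A.submatrix f g).det},
      ∀ j, d * v j = 0 := by
    rintro d ⟨f, g, hf, hg, rfl⟩ j
    have hgb : Function.Bijective g := Finite.injective_iff_bijective.mp hg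
    set B := A.submatrix f g with hB
    have hBv : B *ᵥ (v ∘ g) = 0 := by
      funext l
      have h1 : (B *ᵥ (v ∘ g)) l = (A *ᵥ v) (f l) := by
        simp only [Matrix.mulVec, dotProduct, hB, Matrix.submatrix_apply,
          Function.comp_apply]
        exact Fintype.sum_bijective g hgb _ _ (fun k => rfl)
      rw [h1, hv, Pi.zero_apply]; rfl
    have h2 : B.det • (v ∘ g) = 0 := by
      have h3 := congrArg (fun w => B.adjugate *ᵥ w) hBv
      simpa only [Matrix.mulVec_mulVec, Matrix.adjugate_mul, Matrix.smul_mulVec,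
        Matrix.one_mulVec, Matrix.mulVec_zero] using h3
    obtain ⟨l, rfl⟩ := hgb.surjective j
    have h4 := congrFun h2 l
    simpa only [Pi.smul_apply, Function.comp_apply, smul_eq_mul, Pi.zero_apply] using h4
  have hann : ∀ j, v j ∈ (minorsIdeal A m).annihilator := by
    intro j
    rw [Submodule.mem_annihilator]
    intro x hx
    induction hx using Submodule.span_induction with
    | mem d hd => rw [smul_eq_mul, mul_comm]; exact key d hd j
    | zero => exact smul_zero _
    | add a b _ _ iha ihb => rw [smul_add, iha, ihb, add_zero]
    | smul a x _ ih => rw [smul_comm, ih, smul_zero]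
  refine (Submodule.mem_bot R).mpr (funext fun j => ?_)
  have := h ▸ hann j
  exact (Submodule.mem_bot R).mp this

lemma ann_of_injective (A : Matrix (Fin n) (Fin m) R)
    (hA : Function.Injective A.mulVecLin) : (minorsIdeal A m).annihilator = ⊥ := by
  classical
  rw [eq_bot_iff]
  intro r hr
  rw [Submodule.mem_bot]
  by_contra hr0
  set P : ℕ → Prop := fun i => ∃ (f : Fin i → Fin n) (g : Fin i → Fin m),
      Function.Injective f ∧ Function.Injective g ∧ r * (A.submatrix f g).det ≠ 0 with hPdef
  have hP0 : P 0 := ⟨Fin.elim0, Fin.elim0, fun a => a.elim0, fun a => a.elim0, by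
      rw [Matrix.det_fin_zero, mul_one]; exact hr0⟩
  have hPm : ¬ P m := by
    rintro ⟨f, g, hf, hg, hne⟩
    exact hne (by simpa using Submodule.mem_annihilator.mp hr _ (minor_mem A f g hf hg))
  set k := Nat.findGreatest P m with hkdef
  have hPk : P k := Nat.findGreatest_spec (Nat.zero_le m) hP0
  have hkm : k < m := lt_of_le_of_ne (Nat.findGreatest_le m) (fun h => hPm (h ▸ hPk))
  have hPk1 : ¬ P (k + 1) := Nat.findGreatest_is_greatest (Nat.lt_succ_self k) hkm
  obtain ⟨f, g, hf, hg, hrd⟩ := hPk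
  have hgs : ¬ Function.Surjective g := by
    intro hs
    have := Fintype.card_le_of_surjective g hs
    simp only [Fintype.card_fin] at this
    omega
  obtain ⟨j0, hj0⟩ : ∃ j0, ∀ l, g l ≠ j0 := by
    simpa [Function.Surjective, not_forall, not_exists, eq_comm] using hgs
  set g' : Fin (k + 1) → Fin m := Fin.snoc g j0 with hg'def
  have hg'inj : Function.Injective g' := snoc_inj hg hj0
  set C := A.submatrix f g' with hCdef
  set c : Fin (k + 1) → R :=
    fun j => (-1 : R) ^ (k + (j : ℕ)) * (C.submatrix id j.succAbove).det with hcdef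
  set v : Fin m → R := fun jm => ∑ j : Fin (k + 1), if jm = g' j then r * c j else 0 with hvdef
  have hdet : ∀ i : Fin n,
      (A.submatrix (Fin.snoc f i : Fin (k + 1) → Fin n) g').det
        = ∑ j : Fin (k + 1), A i (g' j) * c j := by
    intro i
    rw [Matrix.det_succ_row _ (Fin.last k)]
    refine Finset.sum_congr rfl fun j _ => ?_
    have h1 : (A.submatrix (Fin.snoc f i : Fin (k + 1) → Fin n) g') (Fin.last k) j
        = A i (g' j) := by simp
    have h2 : (A.submatrix (Fin.snoc f i : Fin (k + 1) → Fin n) g').submatrix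
          (Fin.last k).succAbove j.succAbove = C.submatrix id j.succAbove := by
      rw [Fin.succAbove_last]
      ext p q
      simp [hCdef]
    rw [h1, h2, hcdef, Fin.val_last]
    ring
  have hAv : ∀ i : Fin n, (A *ᵥ v) i
      = r * (A.submatrix (Fin.snoc f i : Fin (k + 1) → Fin n) g').det := by
    intro i
    rw [hdet i, Finset.mul_sum, hvdef]
    rw [mulVec_padded A g' (fun j => r * c j) i]
    exact Finset.sum_congr rfl fun j _ => by ring
  have hAv0 : A *ᵥ v = 0 := by
    funext i
    rw [Pi.zero_apply, hAv i]
    by_cases hi : ∃ l, f l = i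
    · obtain ⟨l, rfl⟩ := hi
      have hz : (A.submatrix (Fin.snoc f (f l) : Fin (k + 1) → Fin n) g').det = 0 := by
        refine Matrix.det_zero_of_row_eq (i := Fin.castSucc l) (j := Fin.last k)
          (Fin.castSucc_lt_last l).ne ?_
        funext q
        simp
      rw [hz, mul_zero]
    · push_neg at hi
      by_contra hne
      exact hPk1 ⟨Fin.snoc f i, g', snoc_inj hf hi, hg'inj, hne⟩
  have hvne : v (g' (Fin.last k)) ≠ 0 := by
    have hval : v (g' (Fin.last k)) = r * c (Fin.last k) := by
      simp only [hvdef]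
      rw [Finset.sum_eq_single (Fin.last k)]
      · rw [if_pos rfl]
      · intro b _ hb
        rw [if_neg (fun h => hb (hg'inj h).symm)]
      · intro h; exact absurd (Finset.mem_univ _) h
    rw [hval]
    simp only [hcdef]
    have hCc : C.submatrix id (Fin.last k).succAbove = A.submatrix f g := by
      rw [Fin.succAbove_last]
      ext p q
      simp [hCdef, hg'def]
    rw [hCc, Fin.val_last, Even.neg_one_pow ⟨k, rfl⟩, one_mul]
    exact hrd
  have hv0 : v = 0 := hA (by rw [map_zero, Matrix.mulVecLin_apply]; exact hAv0)
  exact hvne (by rw [hv0]; rfl)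

lemma smul_mem_range (A : Matrix (Fin n) (Fin m) R) {d : R} (hd : d ∈ minorsIdeal A n)
    (v : Fin n → R) : d • v ∈ LinearMap.range A.mulVecLin := by
  classical
  induction hd using Submodule.span_induction with
  | mem d hd =>
    obtain ⟨f, g, hf, hg, rfl⟩ := hd
    have hfb : Function.Bijective f := Finite.injective_iff_bijective.mp hf
    set B := A.submatrix f g with hB
    set w : Fin n → R := B.adjugate *ᵥ (v ∘ f) with hw
    refine ⟨fun jm => ∑ l : Fin n, if jm = g l then w l else 0, ?_⟩
    rw [Matrix.mulVecLin_apply]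
    funext i
    obtain ⟨l0, rfl⟩ := hfb.surjective i
    rw [mulVec_padded A g w (f l0)]
    have h2 : ∑ l : Fin n, A (f l0) (g l) * w l = (B *ᵥ w) l0 := rfl
    have h3 : B *ᵥ w = B.det • (v ∘ f) := by
      rw [hw, Matrix.mulVec_mulVec, Matrix.mul_adjugate, Matrix.smul_mulVec,
        Matrix.one_mulVec]
    rw [h2, h3]
    rfl
  | zero => rw [zero_smul]; exact Submodule.zero_mem _
  | add x y _ _ ihx ihy => rw [add_smul]; exact Submodule.add_mem _ ihx ihy
  | smul a x _ ih => rw [smul_eq_mul, mul_smul]; exact Submodule.smul_mem _ a ih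

lemma surj_of_top (A : Matrix (Fin n) (Fin m) R) (h : minorsIdeal A n = ⊤) :
    Function.Surjective A.mulVecLin := by
  intro v
  have h1 : (1 : R) ∈ minorsIdeal A n := h ▸ Submodule.mem_top
  have := smul_mem_range A h1 v
  rw [one_smul] at this
  exact LinearMap.mem_range.mp this

lemma top_of_surj (A : Matrix (Fin n) (Fin m) R) (h : Function.Surjective A.mulVecLin) :
    minorsIdeal A n = ⊤ := by
  classical
  choose s hs using h
  have hs' : ∀ y, A *ᵥ s y = y := fun y => by
    have := hs y; rwa [Matrix.mulVecLin_apply] at this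
  rw [Ideal.eq_top_iff_one]
  have hN : (fun j : Fin n => ∑ k : Fin m, s (Pi.single j 1) k • A.transpose k)
      = (1 : Matrix (Fin n) (Fin n) R) := by
    funext j i
    simp only [Finset.sum_apply, Pi.smul_apply, smul_eq_mul, Matrix.transpose_apply]
    have h1 : ∑ k, s (Pi.single j (1 : R)) k * A i k = (A *ᵥ s (Pi.single j (1 : R))) i := by
      simp [Matrix.mulVec, dotProduct, mul_comm]
    rw [h1, hs' (Pi.single j (1 : R))]
    simp [Matrix.one_apply, Pi.single_apply, eq_comm]
  have key : (1 : R)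
      = ∑ p : Fin n → Fin m,
          Matrix.detRowAlternating
            (fun j : Fin n => s (Pi.single j 1) (p j) • A.transpose (p j)) := by
    calc (1 : R) = Matrix.det (1 : Matrix (Fin n) (Fin n) R) := Matrix.det_one.symm
      _ = Matrix.detRowAlternating
            (fun j : Fin n => ∑ k : Fin m, s (Pi.single j 1) k • A.transpose k) := by
          rw [hN]; rfl
      _ = _ := (Matrix.detRowAlternating (R := R) (n := Fin n)).toMultilinearMap.map_sum
          (g := fun j k => s (Pi.single j 1) k • A.transpose k)
  rw [key]
  refine Ideal.sum_mem _ fun p _ => ?_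
  have hsmul : Matrix.detRowAlternating
        (fun j : Fin n => s (Pi.single j 1) (p j) • A.transpose (p j))
      = (∏ j, s (Pi.single j 1) (p j)) •
          Matrix.detRowAlternating (fun j : Fin n => A.transpose (p j)) :=
    (Matrix.detRowAlternating (R := R) (n := Fin n)).toMultilinearMap.map_smul_univ _ _
  rw [hsmul]
  by_cases hp : Function.Injective p
  · have h2 : Matrix.detRowAlternating (fun j : Fin n => A.transpose (p j))
        = (A.submatrix id p).det := by
      have he : (fun j : Fin n => A.transpose (p j)) = ((A.submatrix id p).transpose) := by
        funext j i
        simp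
      rw [he]
      exact Matrix.det_transpose _
    rw [h2, smul_eq_mul]
    exact Ideal.mul_mem_left _ _ (minor_mem A id p Function.injective_id hp)
  · obtain ⟨a, b, hab, hne⟩ := Function.not_injective_iff.mp hp
    have h0 : Matrix.detRowAlternating (fun j : Fin n => A.transpose (p j)) = 0 :=
      AlternatingMap.map_eq_zero_of_not_injective _ _
        (fun hinj => hne (hinj (congrArg A.transpose hab)))
    rw [h0, smul_zero]
    exact Submodule.zero_mem _

end McCoyAux

theorem injective_iff_detRank_and_surjective_iff_minorsIdeal
    {R : Type*} [CommRing R] {n m : ℕ} (A : Matrix (Fin n) (Fin m) R) :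
    (m ≤ n → (Function.Injective A.mulVecLin ↔ detRank A = m)) ∧
    (n ≤ m → (Function.Surjective A.mulVecLin ↔ minorsIdeal A n = ⊤)) := by
  constructor
  · intro hmn
    constructor
    · intro hinj
      have hann := McCoyAux.ann_of_injective A hinj
      have hmem : m ∈ {i : ℕ | i ≤ min n m ∧ (minorsIdeal A i).annihilator = ⊥} :=
        ⟨le_min hmn le_rfl, hann⟩
      have hbdd : BddAbove {i : ℕ | i ≤ min n m ∧ (minorsIdeal A i).annihilator = ⊥} :=
        ⟨min n m, fun i hi => hi.1⟩
      exact le_antisymm (csSup_le ⟨m, hmem⟩ fun i hi => le_trans hi.1 (min_le_right n m))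
        (le_csSup hbdd hmem)
    · intro hrk
      rcases Nat.eq_zero_or_pos m with rfl | hm
      · intro x y _
        exact Subsingleton.elim x y
      · unfold detRank at hrk
        have hne : {i : ℕ | i ≤ min n m ∧ (minorsIdeal A i).annihilator = ⊥}.Nonempty := by
          by_contra hemp
          rw [Set.not_nonempty_iff_eq_empty] at hemp
          rw [hemp, csSup_empty] at hrk
          simp only [Nat.bot_eq_zero] at hrk
          omega
        have hmem := Nat.sSup_mem hne ⟨min n m, fun i hi => hi.1⟩
        rw [hrk] at hmem
        exact McCoyAux.injective_of_ann A hmem.2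
  · intro _
    exact ⟨McCoyAux.top_of_surj A, McCoyAux.surj_of_top A⟩
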